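/- Let $\Bbbk$ be a field, let $h, r \geq 1$, and let $A \in \mathbb{Z}^{h \times r}$ be an integer matrix. In the polynomial ring $\Bbbk[p_1, \ldots, p_r]$, the toric ideal $I_A := \langle p^{u_+} - p^{u_-} : u \in \mathbb{Z}^r, Au = 0 \rangle$ is a prime ideal, where $u = u_+ - u_-$ is the decomposition of $u$ into its componentwise positive part $u_+ \in \mathbb{N}^r$ and negative part $u_- \in \mathbb{N}^r$, and $p^v$ denotes the monomial $p_1^{v_1} \cdots p_r^{v_r}$. -/

import Mathlib

open MvPolynomial

/-- The monomial map `k[p] → k[ℤ^h]`, `p_i ↦ t^{A eᵢ}`. -/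
noncomputable def toricMap (k : Type*) [Field k] {h r : ℕ} (A : Matrix (Fin h) (Fin r) ℤ) :
    MvPolynomial (Fin r) k →ₐ[k] AddMonoidAlgebra k (Fin h → ℤ) :=
  aeval fun i => AddMonoidAlgebra.single (fun j => A j i) 1

lemma toricMap_prod (k : Type*) [Field k] {h r : ℕ} (A : Matrix (Fin h) (Fin r) ℤ)
    (n : Fin r → ℕ) :
    toricMap k A (∏ i, (X i : MvPolynomial (Fin r) k) ^ n i) =
      AddMonoidAlgebra.single (A.mulVec fun i => (n i : ℤ)) 1 := by
  rw [map_prod]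
  simp only [map_pow, toricMap, aeval_X, AddMonoidAlgebra.single_pow, one_pow]
  rw [AddMonoidAlgebra.prod_single]
  congr 1
  · funext j
    simp [Matrix.mulVec, dotProduct, Finset.sum_apply, mul_comm]
  · simp

lemma toricMap_monomial (k : Type*) [Field k] {h r : ℕ} (A : Matrix (Fin h) (Fin r) ℤ)
    (a : Fin r →₀ ℕ) (c : k) :
    toricMap k A (monomial a c) =
      AddMonoidAlgebra.single (A.mulVec fun i => (a i : ℤ)) c := by
  have : (monomial a c : MvPolynomial (Fin r) k) = C c * ∏ i, X i ^ a i := by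
    rw [monomial_eq, Finsupp.prod_pow]
  rw [this, map_mul, toricMap_prod]
  have hc : toricMap k A (C c) = AddMonoidAlgebra.single 0 c := by
    simp [toricMap, algHom_C, AddMonoidAlgebra.coe_algebraMap]
  rw [hc, AddMonoidAlgebra.single_mul_single, zero_add, mul_one]

lemma prod_X_pow_eq_monomial' (k : Type*) [Field k] {r : ℕ} (n : Fin r → ℕ) :
    (∏ i, (X i : MvPolynomial (Fin r) k) ^ n i) =
      monomial (Finsupp.equivFunOnFinite.symm n) 1 := by
  rw [monomial_eq, Finsupp.prod_pow]
  simp [Finsupp.coe_equivFunOnFinite_symm]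

/-- For an integer matrix `A ∈ ℤ^{h×r}`, the toric ideal
`I_A = ⟨ p^{u₊} - p^{u₋} : u ∈ kerℤ A ⟩` is prime over any field `k`. -/
theorem toricIdeal_isPrime (k : Type*) [Field k] (h r : ℕ) (hh : 1 ≤ h) (hr : 1 ≤ r)
    (A : Matrix (Fin h) (Fin r) ℤ) :
    (Ideal.span { f : MvPolynomial (Fin r) k |
        ∃ u : Fin r → ℤ, A.mulVec u = 0 ∧
          f = (∏ i, X i ^ (u i).toNat) - ∏ i, X i ^ (-u i).toNat }).IsPrime := by
  have : IsDomain (AddMonoidAlgebra k (Fin h → ℤ)) := NoZeroDivisors.to_isDomain _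
  set S := { f : MvPolynomial (Fin r) k |
      ∃ u : Fin r → ℤ, A.mulVec u = 0 ∧
        f = (∏ i, X i ^ (u i).toNat) - ∏ i, X i ^ (-u i).toNat } with hS
  set I := Ideal.span S with hI
  set φ := toricMap k A with hφ
  -- each generator is in the kernel
  have hgen : ∀ f ∈ S, φ f = 0 := by
    rintro f ⟨u, hu, rfl⟩
    rw [map_sub, toricMap_prod, toricMap_prod]
    have : (A.mulVec fun i => ((u i).toNat : ℤ)) = A.mulVec fun i => ((-u i).toNat : ℤ) := by
      have h1 : (fun i => ((u i).toNat : ℤ)) = (fun i => ((-u i).toNat : ℤ)) + u := by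
        funext i; simp only [Pi.add_apply]; omega
      rw [h1, Matrix.mulVec_add, hu, add_zero]
    rw [this, sub_self]
  -- the key membership: binomial differences of monomials with equal image lie in I
  have hbin : ∀ (a b : Fin r →₀ ℕ) (c : k),
      (A.mulVec fun i => (a i : ℤ)) = (A.mulVec fun i => (b i : ℤ)) →
      (monomial a c - monomial b c : MvPolynomial (Fin r) k) ∈ I := by
    intro a b c hab
    set u : Fin r → ℤ := fun i => (a i : ℤ) - (b i : ℤ) with hu
    have hu0 : A.mulVec u = 0 := by
      have : u = (fun i => (a i : ℤ)) - fun i => (b i : ℤ) := rfl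
      rw [this, Matrix.mulVec_sub, hab, sub_self]
    set m : Fin r → ℕ := fun i => min (a i) (b i) with hm
    have hgmem : ((∏ i, X i ^ (u i).toNat) - ∏ i, X i ^ (-u i).toNat :
        MvPolynomial (Fin r) k) ∈ I := Ideal.subset_span ⟨u, hu0, rfl⟩
    have key : (monomial (Finsupp.equivFunOnFinite.symm m) c) *
        ((∏ i, X i ^ (u i).toNat) - ∏ i, X i ^ (-u i).toNat)
        = (monomial a c - monomial b c : MvPolynomial (Fin r) k) := by
      rw [prod_X_pow_eq_monomial', prod_X_pow_eq_monomial', mul_sub,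
        monomial_mul, monomial_mul]
      have e1 : Finsupp.equivFunOnFinite.symm m +
          Finsupp.equivFunOnFinite.symm (fun i => (u i).toNat) = a := by
        ext i
        simp only [Finsupp.add_apply, Finsupp.coe_equivFunOnFinite_symm, hm, hu]
        omega
      have e2 : Finsupp.equivFunOnFinite.symm m +
          Finsupp.equivFunOnFinite.symm (fun i => (-u i).toNat) = b := by
        ext i
        simp only [Finsupp.add_apply, Finsupp.coe_equivFunOnFinite_symm, hm, hu]
        omega
      rw [e1, e2, mul_one]
    rw [← key]
    exact Ideal.mul_mem_left _ _ hgmem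
  -- kernel elements are in I, by induction on support size
  have hker : ∀ (n : ℕ) (f : MvPolynomial (Fin r) k), f.support.card ≤ n → φ f = 0 → f ∈ I := by
    intro n
    induction n with
    | zero =>
      intro f hcard _
      have : f = 0 := by
        rwa [Nat.le_zero, Finset.card_eq_zero, MvPolynomial.support_eq_empty] at hcard
      simp [this]
    | succ n ih =>
      intro f hcard hf0
      by_cases hf : f = 0
      · simp [hf]
      obtain ⟨a₀, ha₀⟩ := Finset.nonempty_iff_ne_empty.mpr
        (fun hemp => hf (MvPolynomial.support_eq_empty.mp hemp))
      set v : (Fin r →₀ ℕ) → (Fin h → ℤ) := fun a => A.mulVec fun i => (a i : ℤ) with hv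
      have hexp : φ f = ∑ a ∈ f.support, AddMonoidAlgebra.single (v a) (coeff a f) := by
        conv_lhs => rw [f.as_sum]
        rw [map_sum]
        exact Finset.sum_congr rfl fun a _ => toricMap_monomial k A a (coeff a f)
      -- there is another monomial with the same image
      have hexists : ∃ b ∈ f.support, b ≠ a₀ ∧ v b = v a₀ := by
        by_contra hcon
        push_neg at hcon
        have h0 : (φ f).coeff (v a₀) = 0 := by rw [hf0]; rfl
        rw [hexp] at h0
        rw [AddMonoidAlgebra.coeff_sum, Finsupp.finset_sum_apply] at h0
        rw [Finset.sum_eq_single a₀ (fun b hb hne => by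
          rw [AddMonoidAlgebra.coeff_single_apply, if_neg (fun hvb => (hcon b hb hne) hvb)]) 
          (fun hn => absurd ha₀ hn)] at h0
        rw [AddMonoidAlgebra.coeff_single_apply, if_pos rfl] at h0
        exact (MvPolynomial.mem_support_iff.mp ha₀) h0
      obtain ⟨b, hbsupp, hbne, hvb⟩ := hexists
      set c := coeff a₀ f with hc
      set g : MvPolynomial (Fin r) k := monomial a₀ c - monomial b c with hg
      have hgI : g ∈ I := hbin a₀ b c hvb.symm
      have hgφ : φ g = 0 := by
        rw [hg, map_sub, toricMap_monomial, toricMap_monomial]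
        show AddMonoidAlgebra.single (v a₀) c - AddMonoidAlgebra.single (v b) c = 0
        rw [hvb, sub_self]
      set f' := f - g with hf'
      have hsupp' : f'.support ⊆ f.support.erase a₀ := by
        intro x hx
        have hx0 : coeff x f' ≠ 0 := MvPolynomial.mem_support_iff.mp hx
        have hxa : x ≠ a₀ := by
          rintro rfl
          apply hx0
          rw [hf', hg, coeff_sub, coeff_sub, coeff_monomial, coeff_monomial,
            if_pos rfl, if_neg hbne, hc]
          ring
        rw [Finset.mem_erase, MvPolynomial.mem_support_iff]
        refine ⟨hxa, ?_⟩
        by_cases hbx : b = x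
        · exact hbx ▸ MvPolynomial.mem_support_iff.mp hbsupp
        · intro hfx
          apply hx0
          rw [hf', hg, coeff_sub, coeff_sub, coeff_monomial, coeff_monomial,
            if_neg (fun hh' => hxa hh'.symm), if_neg hbx, hfx]
          ring
      have hcard' : f'.support.card ≤ n := by
        have := Finset.card_le_card hsupp'
        rw [Finset.card_erase_of_mem ha₀] at this
        omega
      have hf'0 : φ f' = 0 := by rw [hf', map_sub, hf0, hgφ, sub_self]
      have hf'I : f' ∈ I := ih f' hcard' hf'0
      have : f = f' + g := by rw [hf']; ring
      rw [this]
      exact Ideal.add_mem _ hf'I hgI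
  -- conclude: I = ker φ
  have hIker : I = RingHom.ker φ.toRingHom := by
    apply le_antisymm
    · rw [hI, Ideal.span_le]
      intro f hf
      exact hgen f hf
    · intro f hf
      exact hker f.support.card f le_rfl hf
  rw [hIker]
  exact RingHom.ker_isPrime _
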